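/- Let μ be a finite Borel measure on ℝ^d and f ∈ L²(μ) with ∫_{B_I} |f|² dμ ≤ K·I^{2α} for 0 < I < 1, where 0 < α < 1. Then for 0 < ε < 1, ∫_{ℝ^d \ B_ε} |f(k)|²/|k|² dμ(k) ≤ C·ε^{2(α−1)} for some constant C depending only on K, α, and ‖f‖_{L²(μ)}. -/

import Mathlib

set_option maxHeartbeats 1000000


open MeasureTheory

/-- Friedrichs-model estimate, `0 < α < 1`: if `∫_{B_I} |f|² dμ ≤ K I^{2α}`
for `0 < I < 1` and `f ∈ L²(μ)`, then
`∫_{ℝ^d ∖ B_ε} |f(k)|²/|k|² dμ(k) ≤ C ε^{2(α−1)}` for all `0 < ε < 1`. -/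
theorem stmt_16 {d : ℕ} (μ : Measure (EuclideanSpace ℝ (Fin d)))
    [IsFiniteMeasure μ]
    (f : EuclideanSpace ℝ (Fin d) → ℝ) (K α : ℝ) (hα0 : 0 < α) (hα1 : α < 1)
    (hf : MemLp f 2 μ)
    (hball : ∀ I : ℝ, 0 < I → I < 1 →
      ∫ k in Metric.ball (0 : EuclideanSpace ℝ (Fin d)) I, (f k) ^ 2 ∂μ
        ≤ K * I ^ (2 * α)) :
    ∃ C : ℝ, ∀ ε : ℝ, 0 < ε → ε < 1 →
      ∫ k in (Metric.ball (0 : EuclideanSpace ℝ (Fin d)) ε)ᶜ,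
          (f k) ^ 2 / ‖k‖ ^ 2 ∂μ ≤ C * ε ^ (2 * (α - 1)) := by
  classical
  have hf2 : Integrable (fun k => f k ^ 2) μ := hf.integrable_sq
  set T : ℝ := ∫ k, f k ^ 2 ∂μ with hT_def
  have hT0 : 0 ≤ T := integral_nonneg fun k => sq_nonneg _
  have hK0 : 0 ≤ K := by
    have h := hball (1/2) (by norm_num) (by norm_num)
    have h0 : (0:ℝ) ≤ ∫ k in Metric.ball (0 : EuclideanSpace ℝ (Fin d)) (1/2), f k ^ 2 ∂μ :=
      integral_nonneg fun k => sq_nonneg _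
    have hp : (0:ℝ) < (1/2 : ℝ) ^ (2 * α) := Real.rpow_pos_of_pos (by norm_num) _
    nlinarith
  set K₁ : ℝ := K + T + 1 with hK₁_def
  have hK₁0 : 0 < K₁ := by positivity
  set r : ℝ := (2:ℝ) ^ (-(2 * (α - 1))) with hr_def
  have hr1 : 1 < r := by
    rw [hr_def]
    rw [Real.one_lt_rpow_iff_of_pos (by norm_num)]
    exact Or.inl ⟨one_lt_two, by nlinarith⟩
  have hr0 : 0 < r := lt_trans one_pos hr1
  -- r = 4 * (2⁻¹) ^ (2α)
  have h2two : (2:ℝ) ^ (2:ℝ) = 4 := by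
    rw [show (2:ℝ) = ((2:ℕ):ℝ) from by norm_num, Real.rpow_natCast]
    norm_num
  have hr4 : r = 4 * (2⁻¹:ℝ) ^ (2 * α) := by
    rw [hr_def, show -(2 * (α - 1)) = 2 + (-(2 * α)) by ring,
      Real.rpow_add (by norm_num : (0:ℝ) < 2), h2two,
      Real.rpow_neg (by norm_num : (0:ℝ) ≤ 2),
      ← Real.inv_rpow (by norm_num : (0:ℝ) ≤ 2)]
  have hr2 : ((2:ℝ)⁻¹) ^ (2 * (α - 1)) = r := by
    rw [hr_def, Real.inv_rpow (by norm_num : (0:ℝ) ≤ 2),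
      ← Real.rpow_neg (by norm_num : (0:ℝ) ≤ 2)]
  -- per-annulus coefficient identity
  have hterm : ∀ j : ℕ,
      (4:ℝ) ^ (j+1) * (K₁ * ((2⁻¹:ℝ) ^ j) ^ (2 * α)) = 4 * K₁ * r ^ j := by
    intro j
    induction j with
    | zero => simp [Real.one_rpow]
    | succ n ih =>
        have hm : ((2⁻¹:ℝ) ^ n * 2⁻¹) ^ (2 * α)
            = ((2⁻¹:ℝ) ^ n) ^ (2 * α) * (2⁻¹:ℝ) ^ (2 * α) :=
          Real.mul_rpow (by positivity) (by norm_num)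
        rw [pow_succ (2⁻¹:ℝ), hm, pow_succ r, pow_succ (4:ℝ)]
        nth_rewrite 2 [hr4]
        linear_combination (4 * ((2⁻¹:ℝ)) ^ (2 * α)) * ih
  -- comparison of r ^ J with ε
  have hrJ : ∀ J : ℕ, ((2⁻¹:ℝ) ^ J) ^ (2 * (α - 1)) = r ^ J := by
    intro J
    induction J with
    | zero => simp [Real.one_rpow]
    | succ n ih =>
        have hm : ((2⁻¹:ℝ) ^ n * 2⁻¹) ^ (2 * (α - 1))
            = ((2⁻¹:ℝ) ^ n) ^ (2 * (α - 1)) * (2⁻¹:ℝ) ^ (2 * (α - 1)) :=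
          Real.mul_rpow (by positivity) (by norm_num)
        rw [pow_succ (2⁻¹:ℝ), hm, ih, hr2, pow_succ]
  set F : EuclideanSpace ℝ (Fin d) → ENNReal := fun k => ENNReal.ofReal (f k ^ 2) with hF_def
  have hT_lint : ∫⁻ k, F k ∂μ = ENNReal.ofReal T :=
    (ofReal_integral_eq_lintegral_ofReal hf2 (ae_of_all _ fun x => sq_nonneg _)).symm
  -- uniform ball bound for the density F
  have hBallLe : ∀ j : ℕ,
      ∫⁻ k in Metric.ball (0 : EuclideanSpace ℝ (Fin d)) ((2⁻¹:ℝ) ^ j), F k ∂μ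
        ≤ ENNReal.ofReal (K₁ * ((2⁻¹:ℝ) ^ j) ^ (2 * α)) := by
    intro j
    cases j with
    | zero =>
        simp only [pow_zero, Real.one_rpow, mul_one]
        calc ∫⁻ k in Metric.ball (0 : EuclideanSpace ℝ (Fin d)) 1, F k ∂μ ≤ ∫⁻ k, F k ∂μ :=
              setLIntegral_le_lintegral _ _
          _ = ENNReal.ofReal T := hT_lint
          _ ≤ ENNReal.ofReal K₁ := by
              apply ENNReal.ofReal_le_ofReal; rw [hK₁_def]; linarith
    | succ n =>
        have hI0 : (0:ℝ) < (2⁻¹:ℝ) ^ (n+1) := by positivity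
        have hI1 : ((2⁻¹:ℝ) ^ (n+1)) < 1 := by
          apply pow_lt_one₀ (by norm_num) (by norm_num)
          omega
        have heq : ∫⁻ k in Metric.ball (0 : EuclideanSpace ℝ (Fin d)) ((2⁻¹:ℝ) ^ (n+1)), F k ∂μ
            = ENNReal.ofReal (∫ k in Metric.ball (0 : EuclideanSpace ℝ (Fin d)) ((2⁻¹:ℝ) ^ (n+1)), f k ^ 2 ∂μ) :=
          (ofReal_integral_eq_lintegral_ofReal hf2.integrableOn
            (ae_of_all _ fun x => sq_nonneg _)).symm
        rw [heq]
        apply ENNReal.ofReal_le_ofReal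
        have h := hball _ hI0 hI1
        have hp : (0:ℝ) ≤ ((2⁻¹:ℝ) ^ (n+1)) ^ (2 * α) := (Real.rpow_pos_of_pos hI0 _).le
        nlinarith
  -- measurability of the integrand
  have hfm : AEMeasurable f μ := hf.aestronglyMeasurable.aemeasurable
  have hgm : AEMeasurable (fun k : EuclideanSpace ℝ (Fin d) => f k ^ 2 / ‖k‖ ^ 2) μ := by
    have h1 : AEMeasurable (fun k : EuclideanSpace ℝ (Fin d) => f k ^ 2) μ := by
      exact hfm.pow_const 2
    exact h1.div ((measurable_norm.pow_const 2).aemeasurable)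
  set g : EuclideanSpace ℝ (Fin d) → ENNReal := fun k => ENNReal.ofReal (f k ^ 2 / ‖k‖ ^ 2) with hg_def
  -- per-annulus bound
  set A : ℕ → Set (EuclideanSpace ℝ (Fin d)) := fun j =>
    Metric.ball (0 : EuclideanSpace ℝ (Fin d)) ((2⁻¹:ℝ) ^ j) \ Metric.ball (0 : EuclideanSpace ℝ (Fin d)) ((2⁻¹:ℝ) ^ (j+1)) with hA_def
  have hAnn : ∀ j : ℕ, ∫⁻ k in A j, g k ∂μ ≤ ENNReal.ofReal (4 * K₁ * r ^ j) := by
    intro j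
    have hmeasA : MeasurableSet (A j) :=
      measurableSet_ball.diff measurableSet_ball
    have hpt : ∀ k ∈ A j, g k ≤ ENNReal.ofReal ((4:ℝ) ^ (j+1)) * F k := by
      intro k hk
      have hk1 : ((2⁻¹:ℝ) ^ (j+1)) ≤ ‖k‖ := by
        have := hk.2
        rw [Metric.mem_ball, dist_zero_right] at this
        linarith [not_lt.mp this]
      have hkey : (((2⁻¹:ℝ) ^ (j+1)) ^ 2) * (4:ℝ) ^ (j+1) = 1 := by
        rw [show (((2⁻¹:ℝ) ^ (j+1)) ^ 2) = ((4:ℝ)⁻¹) ^ (j+1) by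
          rw [← pow_mul, mul_comm, pow_mul]; norm_num, ← mul_pow]
        norm_num
      have hknorm : (0:ℝ) < ‖k‖ ^ 2 := by
        have : (0:ℝ) < (2⁻¹:ℝ) ^ (j+1) := by positivity
        nlinarith
      have hsq : (((2⁻¹:ℝ) ^ (j+1)) ^ 2) ≤ ‖k‖ ^ 2 := by
        apply pow_le_pow_left₀ (by positivity) hk1
      have hineq : f k ^ 2 / ‖k‖ ^ 2 ≤ (4:ℝ) ^ (j+1) * f k ^ 2 := by
        rw [div_le_iff₀ hknorm]
        nlinarith [sq_nonneg (f k), mul_le_mul_of_nonneg_left hsq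
          (mul_nonneg (pow_nonneg (by norm_num : (0:ℝ) ≤ 4) (j+1)) (sq_nonneg (f k)))]
      calc g k = ENNReal.ofReal (f k ^ 2 / ‖k‖ ^ 2) := rfl
        _ ≤ ENNReal.ofReal ((4:ℝ) ^ (j+1) * f k ^ 2) := ENNReal.ofReal_le_ofReal hineq
        _ = ENNReal.ofReal ((4:ℝ) ^ (j+1)) * F k := by
            rw [ENNReal.ofReal_mul (by positivity)]
    calc ∫⁻ k in A j, g k ∂μ
        ≤ ∫⁻ k in A j, ENNReal.ofReal ((4:ℝ) ^ (j+1)) * F k ∂μ :=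
          setLIntegral_mono' hmeasA hpt
      _ = ENNReal.ofReal ((4:ℝ) ^ (j+1)) * ∫⁻ k in A j, F k ∂μ :=
          lintegral_const_mul' _ _ ENNReal.ofReal_ne_top
      _ ≤ ENNReal.ofReal ((4:ℝ) ^ (j+1))
            * ENNReal.ofReal (K₁ * ((2⁻¹:ℝ) ^ j) ^ (2 * α)) := by
          apply mul_le_mul_right
          exact le_trans (lintegral_mono_set Set.diff_subset) (hBallLe j)
      _ = ENNReal.ofReal ((4:ℝ) ^ (j+1) * (K₁ * ((2⁻¹:ℝ) ^ j) ^ (2 * α))) := by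
          rw [← ENNReal.ofReal_mul (by positivity)]
      _ = ENNReal.ofReal (4 * K₁ * r ^ j) := by rw [hterm j]
  -- now the main estimate
  refine ⟨4 * K₁ * r / (r - 1) + T, ?_⟩
  intro ε hε0 hε1
  -- choose J with (2⁻¹)^(J+1) < ε ≤ (2⁻¹)^J
  have hex : ∃ n : ℕ, (2⁻¹:ℝ) ^ (n+1) < ε := by
    obtain ⟨n, hn⟩ := exists_pow_lt_of_lt_one hε0 (by norm_num : (2⁻¹:ℝ) < 1)
    exact ⟨n, lt_of_le_of_lt (pow_le_pow_of_le_one (by norm_num) (by norm_num) (by omega)) hn⟩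
  set J : ℕ := Nat.find hex with hJ_def
  have hJ1 : (2⁻¹:ℝ) ^ (J+1) < ε := Nat.find_spec hex
  have hJ2 : ε ≤ (2⁻¹:ℝ) ^ J := by
    rcases Nat.eq_zero_or_pos J with h0 | hpos
    · rw [h0, pow_zero]; linarith
    · have := Nat.find_min hex (show J - 1 < J by omega)
      have h' : ε ≤ (2⁻¹:ℝ) ^ (J - 1 + 1) := not_lt.mp this
      have : J - 1 + 1 = J := by omega
      rwa [this] at h'
  -- covering of B1 \ Bε by annuli
  have hcover : Metric.ball (0 : EuclideanSpace ℝ (Fin d)) 1 \ Metric.ball (0 : EuclideanSpace ℝ (Fin d)) ε ⊆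
      ⋃ j : Fin (J+1), A (j : ℕ) := by
    intro k hk
    have hk1 : ‖k‖ < 1 := by
      have := hk.1; rwa [Metric.mem_ball, dist_zero_right] at this
    have hk2 : ε ≤ ‖k‖ := by
      have := hk.2; rw [Metric.mem_ball, dist_zero_right] at this; linarith [not_lt.mp this]
    have hexk : ∃ m : ℕ, (2⁻¹:ℝ) ^ (m+1) ≤ ‖k‖ := ⟨J, le_trans hJ1.le hk2⟩
    set j : ℕ := Nat.find hexk with hj_def
    have hj1 : (2⁻¹:ℝ) ^ (j+1) ≤ ‖k‖ := Nat.find_spec hexk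
    have hjJ : j ≤ J := Nat.find_min' hexk (le_trans hJ1.le hk2)
    have hj2 : ‖k‖ < (2⁻¹:ℝ) ^ j := by
      rcases Nat.eq_zero_or_pos j with h0 | hpos
      · rw [h0, pow_zero]; exact hk1
      · have := Nat.find_min hexk (show j - 1 < j by omega)
        have h' : ‖k‖ < (2⁻¹:ℝ) ^ (j - 1 + 1) := not_le.mp this
        have : j - 1 + 1 = j := by omega
        rwa [this] at h'
    refine Set.mem_iUnion.mpr ⟨⟨j, by omega⟩, ?_⟩
    constructor
    · rw [Metric.mem_ball, dist_zero_right]; exact hj2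
    · rw [Metric.mem_ball, dist_zero_right]; exact not_lt.mpr hj1
  -- split the lintegral
  have hsplit : (Metric.ball (0 : EuclideanSpace ℝ (Fin d)) ε)ᶜ ⊆
      (Metric.ball (0 : EuclideanSpace ℝ (Fin d)) 1 \ Metric.ball (0 : EuclideanSpace ℝ (Fin d)) ε) ∪ (Metric.ball (0 : EuclideanSpace ℝ (Fin d)) 1)ᶜ := by
    intro k hk
    by_cases h : k ∈ Metric.ball (0 : EuclideanSpace ℝ (Fin d)) 1
    · exact Or.inl ⟨h, hk⟩
    · exact Or.inr h
  -- bound on the outer region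
  have houter : ∫⁻ k in (Metric.ball (0 : EuclideanSpace ℝ (Fin d)) 1)ᶜ, g k ∂μ ≤ ENNReal.ofReal T := by
    calc ∫⁻ k in (Metric.ball (0 : EuclideanSpace ℝ (Fin d)) 1)ᶜ, g k ∂μ
        ≤ ∫⁻ k in (Metric.ball (0 : EuclideanSpace ℝ (Fin d)) 1)ᶜ, F k ∂μ := by
          apply setLIntegral_mono' measurableSet_ball.compl
          intro k hk
          have hk1 : (1:ℝ) ≤ ‖k‖ := by
            rw [Set.mem_compl_iff, Metric.mem_ball, dist_zero_right] at hk
            linarith [not_lt.mp hk]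
          apply ENNReal.ofReal_le_ofReal
          apply div_le_self (sq_nonneg _)
          nlinarith
      _ ≤ ∫⁻ k, F k ∂μ := setLIntegral_le_lintegral _ _
      _ = ENNReal.ofReal T := hT_lint
  -- bound on the annular region
  have hannul : ∫⁻ k in Metric.ball (0 : EuclideanSpace ℝ (Fin d)) 1 \ Metric.ball (0 : EuclideanSpace ℝ (Fin d)) ε, g k ∂μ
      ≤ ENNReal.ofReal (∑ j ∈ Finset.range (J+1), 4 * K₁ * r ^ j) := by
    calc ∫⁻ k in Metric.ball (0 : EuclideanSpace ℝ (Fin d)) 1 \ Metric.ball (0 : EuclideanSpace ℝ (Fin d)) ε, g k ∂μ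
        ≤ ∫⁻ k in ⋃ j : Fin (J+1), A (j : ℕ), g k ∂μ := lintegral_mono_set hcover
      _ ≤ ∑' j : Fin (J+1), ∫⁻ k in A (j : ℕ), g k ∂μ := lintegral_iUnion_le _ _
      _ = ∑ j : Fin (J+1), ∫⁻ k in A (j : ℕ), g k ∂μ := tsum_fintype _
      _ ≤ ∑ j : Fin (J+1), ENNReal.ofReal (4 * K₁ * r ^ (j:ℕ)) :=
          Finset.sum_le_sum fun j _ => hAnn j
      _ = ∑ j ∈ Finset.range (J+1), ENNReal.ofReal (4 * K₁ * r ^ j) := by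
          rw [← Fin.sum_univ_eq_sum_range]
      _ = ENNReal.ofReal (∑ j ∈ Finset.range (J+1), 4 * K₁ * r ^ j) := by
          rw [ENNReal.ofReal_sum_of_nonneg]
          intro j _
          positivity
  -- geometric series bound
  have hεe0 : (0:ℝ) < ε ^ (2 * (α - 1)) := Real.rpow_pos_of_pos hε0 _
  have hεe1 : (1:ℝ) ≤ ε ^ (2 * (α - 1)) :=
    Real.one_le_rpow_of_pos_of_le_one_of_nonpos hε0 hε1.le (by nlinarith)
  have hrJε : r ^ J ≤ ε ^ (2 * (α - 1)) := by
    rw [← hrJ J]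
    exact Real.rpow_le_rpow_of_nonpos hε0 hJ2 (by nlinarith)
  have hgeom : ∑ j ∈ Finset.range (J+1), 4 * K₁ * r ^ j
      ≤ 4 * K₁ * r / (r - 1) * ε ^ (2 * (α - 1)) := by
    rw [← Finset.mul_sum, geom_sum_eq (ne_of_gt hr1)]
    have hr1' : (0:ℝ) < r - 1 := by linarith
    have h2 : r ^ (J+1) ≤ r * ε ^ (2 * (α - 1)) := by
      rw [pow_succ, mul_comm]
      exact mul_le_mul_of_nonneg_left hrJε hr0.le
    calc 4 * K₁ * ((r ^ (J+1) - 1) / (r - 1))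
        ≤ 4 * K₁ * ((r * ε ^ (2 * (α - 1))) / (r - 1)) := by
          apply mul_le_mul_of_nonneg_left _ (by positivity)
          exact (div_le_div_iff_of_pos_right hr1').mpr (by linarith)
      _ = 4 * K₁ * r / (r - 1) * ε ^ (2 * (α - 1)) := by ring
  -- assemble in ℝ≥0∞
  have hmain : ∫⁻ k in (Metric.ball (0 : EuclideanSpace ℝ (Fin d)) ε)ᶜ, g k ∂μ
      ≤ ENNReal.ofReal ((4 * K₁ * r / (r - 1) + T) * ε ^ (2 * (α - 1))) := by
    calc ∫⁻ k in (Metric.ball (0 : EuclideanSpace ℝ (Fin d)) ε)ᶜ, g k ∂μ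
        ≤ ∫⁻ k in (Metric.ball (0 : EuclideanSpace ℝ (Fin d)) 1 \ Metric.ball (0 : EuclideanSpace ℝ (Fin d)) ε) ∪ (Metric.ball (0 : EuclideanSpace ℝ (Fin d)) 1)ᶜ,
            g k ∂μ := lintegral_mono_set hsplit
      _ ≤ (∫⁻ k in Metric.ball (0 : EuclideanSpace ℝ (Fin d)) 1 \ Metric.ball (0 : EuclideanSpace ℝ (Fin d)) ε, g k ∂μ)
            + ∫⁻ k in (Metric.ball (0 : EuclideanSpace ℝ (Fin d)) 1)ᶜ, g k ∂μ := lintegral_union_le _ _ _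
      _ ≤ ENNReal.ofReal (∑ j ∈ Finset.range (J+1), 4 * K₁ * r ^ j)
            + ENNReal.ofReal T := add_le_add hannul houter
      _ = ENNReal.ofReal ((∑ j ∈ Finset.range (J+1), 4 * K₁ * r ^ j) + T) := by
          rw [ENNReal.ofReal_add ?h1 hT0]
          case h1 =>
            apply Finset.sum_nonneg
            intro j _
            positivity
      _ ≤ ENNReal.ofReal ((4 * K₁ * r / (r - 1) + T) * ε ^ (2 * (α - 1))) := by
          apply ENNReal.ofReal_le_ofReal
          nlinarith [hgeom, hεe1, hT0]
  -- convert back to a Bochner integral statement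
  have hnn : 0 ≤ᵐ[μ.restrict (Metric.ball (0 : EuclideanSpace ℝ (Fin d)) ε)ᶜ] fun k => f k ^ 2 / ‖k‖ ^ 2 :=
    ae_of_all _ fun k => by positivity
  have heq : ∫ k in (Metric.ball (0 : EuclideanSpace ℝ (Fin d)) ε)ᶜ, f k ^ 2 / ‖k‖ ^ 2 ∂μ
      = (∫⁻ k in (Metric.ball (0 : EuclideanSpace ℝ (Fin d)) ε)ᶜ, g k ∂μ).toReal := by
    rw [integral_eq_lintegral_of_nonneg_ae hnn
      (hgm.aestronglyMeasurable.restrict)]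
  rw [heq]
  have hC0 : (0:ℝ) ≤ 4 * K₁ * r / (r - 1) + T := by
    have h1 : (0:ℝ) ≤ 4 * K₁ * r / (r - 1) := div_nonneg (by positivity) (by linarith)
    linarith
  exact ENNReal.toReal_le_of_le_ofReal (mul_nonneg hC0 hεe0.le) hmain
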